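/- Let H be a chordal graph and K a clique of H. Then H admits a perfect elimination ordering in which the vertices of K appear last. -/

import Mathlib

section PeoAux

variable {W : Type*} (H : SimpleGraph W)

/-- A list is a perfect elimination ordering with respect to `H` (restricted to
the members of the list): each vertex's neighbors among later vertices form a clique. -/
def IsPeoList (H : SimpleGraph W) : List W → Prop
  | [] => True
  | v :: r => (∀ a ∈ r, ∀ b ∈ r, H.Adj v a → H.Adj v b → a ≠ b → H.Adj a b) ∧ IsPeoList H r

/-- A list is a perfect elimination ordering (w.r.t. the whole graph `H`,
restricted to the members of the list): each vertex's neighbors among the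
later vertices form a clique. -/

lemma IsPeoList.sublist : ∀ {l' l : List W}, List.Sublist l' l → IsPeoList H l → IsPeoList H l'
  | _, _, List.Sublist.slnil, _ => trivial
  | _, _, List.Sublist.cons a h, hp => IsPeoList.sublist h hp.2
  | _, _, List.Sublist.cons₂ a h, hp =>
    ⟨fun x hx y hy => hp.1 x (h.subset hx) y (h.subset hy), IsPeoList.sublist h hp.2⟩

lemma isPeoList_of_clique (C : Set W) (hC : H.IsClique C) :
    ∀ l : List W, (∀ x ∈ l, x ∈ C) → IsPeoList H l
  | [], _ => trivial
  | v :: r, h => by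
    refine ⟨fun a ha b hb _ _ hab => hC (h a (List.mem_cons_of_mem _ ha))
      (h b (List.mem_cons_of_mem _ hb)) hab, isPeoList_of_clique C hC r ?_⟩
    exact fun x hx => h x (List.mem_cons_of_mem _ hx)

/-- Key lemma: a graph with a PEO list has a simplicial vertex outside any
clique `C` that is not everything. -/
lemma exists_simplicial : ∀ (l : List W), l.Nodup → IsPeoList H l →
    ∀ (C : Set W), H.IsClique C → (∀ c ∈ C, c ∈ l) → (∃ x ∈ l, x ∉ C) →
    ∃ v ∈ l, v ∉ C ∧ ∀ a ∈ l, ∀ b ∈ l, H.Adj v a → H.Adj v b → a ≠ b → H.Adj a b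
  | [], _, _, C, _, _, hex => by simp at hex
  | v :: r, hn, hp, C, hC, hCl, hex => by
    by_cases hvC : v ∈ C
    · -- v ∈ C : look at C' = neighbors of v in r
      set C' : Set W := {a | a ∈ r ∧ H.Adj v a} with hC'def
      have hC'clique : H.IsClique C' := fun a ha b hb hab => hp.1 a ha.1 b hb.1 ha.2 hb.2 hab
      by_cases hall : ∀ a ∈ r, a ∈ C'
      · -- everything is pairwise adjacent
        obtain ⟨x, hxl, hxC⟩ := hex
        have hxv : x ≠ v := fun h => hxC (h ▸ hvC)
        refine ⟨x, hxl, hxC, fun a ha b hb _ _ hab => ?_⟩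
        -- any two distinct members of v :: r are adjacent
        rcases List.mem_cons.1 ha with ha' | ha'
        · subst ha'
          rcases List.mem_cons.1 hb with hb' | hb'
          · exact absurd hb'.symm hab
          · exact (hall b hb').2
        · rcases List.mem_cons.1 hb with hb' | hb'
          · subst hb'
            exact ((hall a ha').2).symm
          · exact hC'clique (hall a ha') (hall b hb') hab
      · push_neg at hall
        obtain ⟨w, hwr, hwC', hsimp⟩ := exists_simplicial r hn.of_cons hp.2 C' hC'clique
          (fun c hc => hc.1) hall
        have hwv : ¬ H.Adj v w := fun h => hwC' ⟨hwr, h⟩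
        have hwC : w ∉ C := by
          intro hw
          exact hwv (hC hvC hw (fun h => (List.nodup_cons.1 hn).1 (h ▸ hwr)))
        refine ⟨w, List.mem_cons_of_mem _ hwr, hwC, fun a ha b hb h1 h2 hab => ?_⟩
        rcases List.mem_cons.1 ha with ha' | ha'
        · subst ha'; exact absurd h1.symm hwv
        · rcases List.mem_cons.1 hb with hb' | hb'
          · subst hb'; exact absurd h2.symm hwv
          · exact hsimp a ha' b hb' h1 h2 hab
    · -- v ∉ C : v itself is simplicial
      refine ⟨v, List.mem_cons_self, hvC, fun a ha b hb h1 h2 hab => ?_⟩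
      have hav : a ≠ v := fun h => H.irrefl (h ▸ h1)
      have hbv : b ≠ v := fun h => H.irrefl (h ▸ h2)
      exact hp.1 a ((List.mem_cons.1 ha).resolve_left hav) b
        ((List.mem_cons.1 hb).resolve_left hbv) h1 h2 hab

lemma peo_clique_last [DecidableEq W] (C : Set W) (hC : H.IsClique C) :
    ∀ (n : ℕ) (l : List W), l.length ≤ n → l.Nodup → IsPeoList H l →
    ∃ l₁ l₂ : List W, IsPeoList H (l₁ ++ l₂) ∧ (l₁ ++ l₂).Nodup ∧
      (∀ x, x ∈ l₁ ++ l₂ ↔ x ∈ l) ∧ (∀ x ∈ l₁, x ∉ C) ∧ (∀ x ∈ l₂, x ∈ C) := by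
  intro n
  induction n with
  | zero =>
    intro l hlen _ _
    have : l = [] := List.eq_nil_of_length_eq_zero (Nat.le_zero.1 hlen)
    subst this
    exact ⟨[], [], trivial, List.nodup_nil, by simp, by simp, by simp⟩
  | succ n ih =>
    intro l hlen hnd hpeo
    by_cases hall : ∀ x ∈ l, x ∈ C
    · exact ⟨[], l, isPeoList_of_clique H C hC l hall, by simpa using hnd,
        by simp, by simp, hall⟩
    · push_neg at hall
      obtain ⟨x, hxl, hxC⟩ := hall
      -- restrict C to members of l
      set C₀ : Set W := C ∩ {y | y ∈ l} with hC₀def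
      have hC₀clique : H.IsClique C₀ := hC.subset Set.inter_subset_left
      obtain ⟨v, hvl, hvC₀, hsimp⟩ := exists_simplicial H l hnd hpeo C₀ hC₀clique
        (fun c hc => hc.2) ⟨x, hxl, fun h => hxC h.1⟩
      have hvC : v ∉ C := fun h => hvC₀ ⟨h, hvl⟩
      set l' : List W := l.erase v with hl'def
      have hsub : List.Sublist l' l := List.erase_sublist
      have hlen' : l'.length ≤ n := by
        rw [hl'def, List.length_erase_of_mem hvl]
        have := List.length_pos_of_mem hvl
        omega
      have hnd' : l'.Nodup := hnd.sublist hsub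
      obtain ⟨l₁, l₂, hp2, hnd2, hmem2, h1, h2⟩ :=
        ih l' hlen' hnd' (IsPeoList.sublist H hsub hpeo)
      have hmem2' : ∀ y, y ∈ l₁ ++ l₂ ↔ (y ≠ v ∧ y ∈ l) := by
        intro y; rw [hmem2 y, hl'def, hnd.mem_erase_iff]
      refine ⟨v :: l₁, l₂, ?_, ?_, ?_, ?_, h2⟩
      · refine ⟨fun a ha b hb h1' h2' hab => ?_, hp2⟩
        exact hsimp a ((hmem2' a).1 ha).2 b ((hmem2' b).1 hb).2 h1' h2' hab
      · rw [List.cons_append, List.nodup_cons]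
        exact ⟨fun h => ((hmem2' v).1 h).1 rfl, hnd2⟩
      · intro y
        rw [List.cons_append, List.mem_cons, hmem2' y]
        constructor
        · rintro (rfl | ⟨_, hy⟩); exacts [hvl, hy]
        · intro hy
          by_cases hyv : y = v
          · exact Or.inl hyv
          · exact Or.inr ⟨hyv, hy⟩
      · intro y hy
        rcases List.mem_cons.1 hy with rfl | hy'
        · exact hvC
        · exact h1 y hy'

lemma isPeoList_of_getElem : ∀ (l : List W),
    (∀ (i j k : ℕ) (hi : i < l.length) (hj : j < l.length) (hk : k < l.length),
      i < j → i < k → j ≠ k → H.Adj (l[i]'hi) (l[j]'hj) → H.Adj (l[i]'hi) (l[k]'hk) →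
      H.Adj (l[j]'hj) (l[k]'hk)) → IsPeoList H l
  | [], _ => trivial
  | v :: r, h => by
    constructor
    · intro a ha b hb h1 h2 hab
      obtain ⟨ia, hia, rfl⟩ := List.mem_iff_getElem.1 ha
      obtain ⟨ib, hib, rfl⟩ := List.mem_iff_getElem.1 hb
      have hne : ia + 1 ≠ ib + 1 := by
        intro he
        apply hab
        have : ia = ib := by omega
        subst this; rfl
      have := h 0 (ia + 1) (ib + 1) (by simp) (by simpa using hia) (by simpa using hib)
        (by omega) (by omega) hne
      simpa using this (by simpa using h1) (by simpa using h2)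
    · refine isPeoList_of_getElem r (fun i j k hi hj hk hij hik hjk h1 h2 => ?_)
      have := h (i+1) (j+1) (k+1) (by simpa using hi) (by simpa using hj) (by simpa using hk)
        (by omega) (by omega) (by omega)
      simpa using this (by simpa using h1) (by simpa using h2)

lemma IsPeoList.adj_of_lt : ∀ (l : List W), l.Nodup → IsPeoList H l →
    ∀ (i j k : ℕ) (hi : i < l.length) (hj : j < l.length) (hk : k < l.length),
      i < j → i < k → j ≠ k →
      H.Adj (l[i]'hi) (l[j]'hj) → H.Adj (l[i]'hi) (l[k]'hk) → H.Adj (l[j]'hj) (l[k]'hk)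
  | [], _, _, i, j, k, hi, _, _ => by simp at hi
  | v :: r, hn, hp, i, j, k, hi, hj, hk => by
    intro hij hik hjk h1 h2
    match i, j, k with
    | 0, j'+1, k'+1 =>
      simp only [List.getElem_cons_zero, List.getElem_cons_succ] at h1 h2 ⊢
      refine hp.1 _ (List.getElem_mem _) _ (List.getElem_mem _) h1 h2 ?_
      intro he
      exact hjk (by rw [(List.Nodup.getElem_inj_iff hn.of_cons).1 he])
    | i'+1, j'+1, k'+1 =>
      simp only [List.getElem_cons_succ] at h1 h2 ⊢
      exact IsPeoList.adj_of_lt r hn.of_cons hp.2 i' j' k' _ _ _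
        (by omega) (by omega) (by omega) h1 h2

end PeoAux

/-- Rose's lemma: A chordal graph `H` with a clique `K` admits a
perfect elimination ordering in which the vertices of `K` appear last. -/
theorem chordal_peo_with_clique_last
    (W : Type*) [Fintype W] (H : SimpleGraph W)
    (hchordal : ∃ π : Fin (Fintype.card W) ≃ W,
      ∀ r s t : Fin (Fintype.card W), r < s → r < t → s ≠ t →
        H.Adj (π r) (π s) → H.Adj (π r) (π t) → H.Adj (π s) (π t))
    (K : Set W) (hK : H.IsClique K) :
    ∃ π : Fin (Fintype.card W) ≃ W,
      (∀ r s t : Fin (Fintype.card W), r < s → r < t → s ≠ t →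
        H.Adj (π r) (π s) → H.Adj (π r) (π t) → H.Adj (π s) (π t)) ∧
      (∀ r s : Fin (Fintype.card W), π r ∉ K → π s ∈ K → r < s) := by
  classical
  obtain ⟨π, hπ⟩ := hchordal
  set l₀ : List W := (List.finRange (Fintype.card W)).map π with hl₀
  have hlen : l₀.length = Fintype.card W := by simp [hl₀]
  have hnd : l₀.Nodup := (List.nodup_finRange _).map π.injective
  have hmem : ∀ x, x ∈ l₀ := by
    intro x
    simp only [hl₀, List.mem_map]
    exact ⟨π.symm x, List.mem_finRange _, π.apply_symm_apply x⟩
  have hget : ∀ (m : ℕ) (hm : m < l₀.length), l₀[m]'hm = π ⟨m, by rw [← hlen]; exact hm⟩ := by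
    intro m hm
    simp [hl₀]
  have hpeo : IsPeoList H l₀ := by
    refine isPeoList_of_getElem H l₀ (fun i j k hi hj hk hij hik hjk h1 h2 => ?_)
    rw [hget i hi, hget j hj] at h1
    rw [hget i hi, hget k hk] at h2
    rw [hget j hj, hget k hk]
    exact hπ ⟨i, by omega⟩ ⟨j, by omega⟩ ⟨k, by omega⟩ hij hik
      (fun he => hjk (by simpa using he)) h1 h2
  obtain ⟨l₁, l₂, hp, hnd', hmem', h1, h2⟩ :=
    peo_clique_last H K hK (Fintype.card W) l₀ (le_of_eq hlen) hnd hpeo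
  set L : List W := l₁ ++ l₂ with hL
  have hmemL : ∀ x, x ∈ L := fun x => (hmem' x).2 (hmem x)
  have hLlen : L.length = Fintype.card W := by
    rw [← hlen]
    exact ((List.perm_ext_iff_of_nodup hnd' hnd).2 hmem').length_eq
  refine ⟨(finCongr hLlen.symm).trans (hnd'.getEquivOfForallMemList L hmemL), ?_, ?_⟩
  · intro r s t hrs hrt hst hadj1 hadj2
    exact IsPeoList.adj_of_lt H L hnd' hp r s t (by omega) (by omega) (by omega)
      hrs hrt (fun he => hst (Fin.ext he)) hadj1 hadj2
  · intro r s hr hs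
    simp only [Equiv.trans_apply, finCongr_apply] at hr hs
    have hgetL : ∀ (m : Fin (Fintype.card W)), (hnd'.getEquivOfForallMemList L hmemL) (Fin.cast hLlen.symm m)
        = L[(m : ℕ)]'(by omega) := fun m => rfl
    rw [hgetL r] at hr
    rw [hgetL s] at hs
    have hrlt : (r : ℕ) < l₁.length := by
      by_contra hc
      push_neg at hc
      rw [List.getElem_append_right hc] at hr
      exact hr (h2 _ (List.getElem_mem _))
    have hsge : l₁.length ≤ (s : ℕ) := by
      by_contra hc
      push_neg at hc
      rw [List.getElem_append_left hc] at hs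
      exact h1 _ (List.getElem_mem _) hs
    exact Fin.lt_def.2 (by omega)
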